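/- The collection of candidate assignments can be reduced from n(2^m − 1) pairs to at most nm pairs without changing the optimum: let M, N be finite nonempty sets with |M| = m, |N| = n, let p : M × N → ℝ with p(i,j) ≥ 0, and let q(S,j) = max_{i∈S} p(i,j) for nonempty S ⊆ M. For k ∈ M and j ∈ N define S_{k,j} = {i ∈ M : p(i,j) ≤ p(k,j)}. Then (a) for every nonempty S ⊆ M and every j ∈ N there exists k ∈ S with S ⊆ S_{k,j} and q(S_{k,j}, j) = q(S,j); and (b) the minimum cover cost of M over all assignment pairs {(S,j) : ∅ ≠ S ⊆ M, j ∈ N} equals the minimum cover cost over the reduced collection {(S_{k,j}, j) : k ∈ M, j ∈ N}, which contains at most nm pairs. -/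

import Mathlib

open Finset

/-- Cost of an assignment pair `(S, j)`: the maximal power cost `p i j` over
mobiles `i ∈ S` (and `0` if `S` is empty). -/
noncomputable def pairCost {M N : Type*} (p : M → N → ℝ)
    (c : Finset M × N) : ℝ :=
  if h : c.1.Nonempty then c.1.sup' h (fun i => p i c.2) else 0

/-- A family of assignment pairs covers the set of mobiles `M` if every mobile
belongs to the mobile set of some pair of the family. -/
def CoversAll {M N : Type*} (𝒞 : Finset (Finset M × N)) : Prop :=
  ∀ i : M, ∃ c ∈ 𝒞, i ∈ c.1

/-- The candidate set `S_{k,j}` of all mobiles whose power cost at base station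
`j` does not exceed that of mobile `k`. -/
noncomputable def candSet {M N : Type*} [Fintype M] (p : M → N → ℝ) (k : M) (j : N) :
    Finset M :=
  univ.filter (fun i => p i j ≤ p k j)

private lemma sum_image_le_aux {α β : Type*} [DecidableEq β] (s : Finset α)
    (f : α → β) (g : β → ℝ) (hg : ∀ b, 0 ≤ g b) :
    ∑ b ∈ s.image f, g b ≤ ∑ a ∈ s, g (f a) := by
  classical
  induction s using Finset.induction with
  | empty => simp
  | insert a s ha ih =>
    rw [Finset.image_insert, Finset.sum_insert ha]
    by_cases h : f a ∈ s.image f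
    · rw [Finset.insert_eq_self.mpr h]
      have := hg (f a)
      linarith
    · rw [Finset.sum_insert h]
      linarith

/-- Reduction of the collection of candidate assignments: (a) every assignment
pair `(S, j)` is dominated, at equal cost, by a pair `(S_{k,j}, j)` with
`k ∈ S`; (b) the minimal cover cost over all assignment pairs equals the
minimal cover cost over the reduced collection `{(S_{k,j}, j) : k ∈ M, j ∈ N}`,
which contains at most `n·m` pairs. -/
theorem reduced_collection_preserves_optimum {M N : Type*}
    [Fintype M] [DecidableEq M] [Nonempty M]
    [Fintype N] [DecidableEq N] [Nonempty N]
    (p : M → N → ℝ) (hp : ∀ i j, 0 ≤ p i j) :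
    (∀ S : Finset M, S.Nonempty → ∀ j : N, ∃ k ∈ S,
        S ⊆ candSet p k j ∧ pairCost p (candSet p k j, j) = pairCost p (S, j)) ∧
    (sInf {r : ℝ | ∃ 𝒞 : Finset (Finset M × N),
          (∀ c ∈ 𝒞, c.1.Nonempty) ∧ CoversAll 𝒞 ∧
          r = ∑ c ∈ 𝒞, pairCost p c}
        = sInf {r : ℝ | ∃ 𝒞 ⊆ image (fun kj : M × N => (candSet p kj.1 kj.2, kj.2)) univ,
            CoversAll 𝒞 ∧ r = ∑ c ∈ 𝒞, pairCost p c}) ∧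
    (image (fun kj : M × N => (candSet p kj.1 kj.2, kj.2)) univ).card
      ≤ Fintype.card N * Fintype.card M := by
  classical
  -- nonnegativity of costs
  have hcost : ∀ c : Finset M × N, 0 ≤ pairCost p c := by
    intro c
    unfold pairCost
    split
    · rename_i h
      obtain ⟨i, hi⟩ := h
      exact le_trans (hp i c.2) (Finset.le_sup' (fun i => p i c.2) hi)
    · exact le_refl 0
  -- membership in candSet
  have hmemcand : ∀ (i k : M) (j : N), i ∈ candSet p k j ↔ p i j ≤ p k j := by
    intro i k j
    simp [candSet]
  -- part (a)
  have parta : ∀ S : Finset M, S.Nonempty → ∀ j : N, ∃ k ∈ S,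
      S ⊆ candSet p k j ∧ pairCost p (candSet p k j, j) = pairCost p (S, j) := by
    intro S hS j
    obtain ⟨k, hk, hkeq⟩ := Finset.exists_mem_eq_sup' hS (fun i => p i j)
    have hsub : S ⊆ candSet p k j := by
      intro i hi
      rw [hmemcand]
      rw [← hkeq]
      exact Finset.le_sup' (fun i => p i j) hi
    refine ⟨k, hk, hsub, ?_⟩
    have hkc : k ∈ candSet p k j := (hmemcand k k j).mpr le_rfl
    have hne : (candSet p k j).Nonempty := ⟨k, hkc⟩
    unfold pairCost
    rw [dif_pos hne, dif_pos hS]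
    simp only
    rw [hkeq]
    apply le_antisymm
    · exact Finset.sup'_le _ _ (fun i hi => (hmemcand i k j).mp hi)
    · exact Finset.le_sup' (fun i => p i j) hkc
  refine ⟨parta, ?_, ?_⟩
  · -- the two sets
    set A := {r : ℝ | ∃ 𝒞 : Finset (Finset M × N),
          (∀ c ∈ 𝒞, c.1.Nonempty) ∧ CoversAll 𝒞 ∧
          r = ∑ c ∈ 𝒞, pairCost p c} with hA
    set B := {r : ℝ | ∃ 𝒞 ⊆ image (fun kj : M × N => (candSet p kj.1 kj.2, kj.2)) univ,
            CoversAll 𝒞 ∧ r = ∑ c ∈ 𝒞, pairCost p c} with hB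
    have hAlb : ∀ r ∈ A, (0:ℝ) ≤ r := by
      rintro r ⟨𝒞, -, -, rfl⟩
      exact Finset.sum_nonneg fun c _ => hcost c
    have hBlb : ∀ r ∈ B, (0:ℝ) ≤ r := by
      rintro r ⟨𝒞, -, -, rfl⟩
      exact Finset.sum_nonneg fun c _ => hcost c
    have hAbdd : BddBelow A := ⟨0, hAlb⟩
    have hBbdd : BddBelow B := ⟨0, hBlb⟩
    -- B ⊆ A-likeness: any element of B is in A
    have hBA : B ⊆ A := by
      rintro r ⟨𝒞, h𝒞, hcov, rfl⟩
      refine ⟨𝒞, ?_, hcov, rfl⟩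
      intro c hc
      obtain ⟨kj, -, rfl⟩ := Finset.mem_image.mp (h𝒞 hc)
      exact ⟨kj.1, (hmemcand kj.1 kj.1 kj.2).mpr le_rfl⟩
    -- B is nonempty: the full reduced family
    have hBne : B.Nonempty := by
      obtain ⟨j⟩ := ‹Nonempty N›
      refine ⟨_, Finset.image (fun kj : M × N => (candSet p kj.1 kj.2, kj.2)) univ,
        subset_rfl, ?_, rfl⟩
      intro i
      exact ⟨(candSet p i j, j), Finset.mem_image_of_mem _ (mem_univ (i, j)),
        (hmemcand i i j).mpr le_rfl⟩
    have hAne : A.Nonempty := ⟨_, hBA hBne.choose_spec⟩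
    apply le_antisymm
    · exact csInf_le_csInf hAbdd hBne hBA
    · -- sInf B ≤ sInf A: every element of A dominated by an element of B
      apply le_csInf hAne
      rintro r ⟨𝒞, h𝒞, hcov, rfl⟩
      -- map each pair to its dominating reduced pair
      have choice : ∀ c ∈ 𝒞, ∃ k : M, c.1 ⊆ candSet p k c.2 ∧
          pairCost p (candSet p k c.2, c.2) = pairCost p c := by
        intro c hc
        obtain ⟨k, -, hsub, heq⟩ := parta c.1 (h𝒞 c hc) c.2
        exact ⟨k, hsub, heq⟩
      set f : Finset M × N → Finset M × N := fun c =>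
        if hc : c ∈ 𝒞 then (candSet p (choice c hc).choose c.2, c.2) else c with hf
      have hfprop : ∀ c ∈ 𝒞, c.1 ⊆ (f c).1 ∧ pairCost p (f c) = pairCost p c ∧
          f c ∈ image (fun kj : M × N => (candSet p kj.1 kj.2, kj.2)) univ := by
        intro c hc
        have h := (choice c hc).choose_spec
        refine ⟨?_, ?_, ?_⟩
        · simp only [hf, dif_pos hc]
          exact h.1
        · simp only [hf, dif_pos hc]
          exact h.2
        · simp only [hf, dif_pos hc]
          exact Finset.mem_image_of_mem _ (mem_univ ((choice c hc).choose, c.2))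
      have hmemB : (∑ c ∈ 𝒞.image f, pairCost p c) ∈ B := by
        refine ⟨𝒞.image f, ?_, ?_, rfl⟩
        · intro c' hc'
          obtain ⟨c, hc, rfl⟩ := Finset.mem_image.mp hc'
          exact (hfprop c hc).2.2
        · intro i
          obtain ⟨c, hc, hi⟩ := hcov i
          exact ⟨f c, Finset.mem_image_of_mem f hc, (hfprop c hc).1 hi⟩
      calc sInf B ≤ ∑ c ∈ 𝒞.image f, pairCost p c := csInf_le hBbdd hmemB
        _ ≤ ∑ c ∈ 𝒞, pairCost p (f c) := sum_image_le_aux 𝒞 f (pairCost p) hcost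
        _ = ∑ c ∈ 𝒞, pairCost p c := Finset.sum_congr rfl fun c hc => (hfprop c hc).2.1
  · calc (image (fun kj : M × N => (candSet p kj.1 kj.2, kj.2)) univ).card
        ≤ (univ : Finset (M × N)).card := Finset.card_image_le
      _ = Fintype.card M * Fintype.card N := by simp [Fintype.card_prod]
      _ = Fintype.card N * Fintype.card M := mul_comm _ _
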